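/- Define w(n) by Σ_{n≥2} w(n)q^n = Σ_{i≥2} q^{2^{i−1}}(1+q^{2^{i−2}}) / ((1−q)·Π_{j=0}^{i−3}(1−q^{2^j})). Let n ≥ 2 not be a power of 2, with binary expansion n = Σ_{i=a}^{e} n_i·2^i, n_a ≠ 0 ≠ n_e. Then w(n) ≡ 2 + 2⌊a/2⌋ + 2χ(a even)(1−2n_{a+1})(e−a−1) + 4χ(a odd)(e−a) + 4χ(a even)·(e·Σ_{i=a+2}^{e−χ(e even)} n_i + a·n_{a+2} + Σ_{t=(a+4)/2}^{⌊(e+1)/2⌋} n_{2t−1}) (mod 8). -/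

import Mathlib

open PowerSeries Finset

/-- The i-th summand of the reduced generating function:
q^{2^{i−1}}(1+q^{2^{i−2}}) / ((1−q)·∏_{j=0}^{i−3}(1−q^{2^j})). -/
noncomputable def Wseries (i : ℕ) : PowerSeries ℤ :=
  PowerSeries.X ^ (2 ^ (i - 1)) * (1 + PowerSeries.X ^ (2 ^ (i - 2))) *
    (((1 - PowerSeries.X) *
        ∏ j ∈ Finset.range (i - 2), (1 - PowerSeries.X ^ (2 ^ j)) :
      PowerSeries ℤ).invOfUnit 1)

noncomputable def Dk (k : ℕ) : PowerSeries ℤ :=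
  (1 - PowerSeries.X) * ∏ j ∈ Finset.range k, (1 - PowerSeries.X ^ (2 ^ j))

noncomputable def uk (k : ℕ) : PowerSeries ℤ := (Dk k).invOfUnit 1

lemma Wseries_eq (i : ℕ) : Wseries (i + 2) =
    PowerSeries.X ^ (2 ^ (i + 1)) * (1 + PowerSeries.X ^ (2 ^ i)) * uk i := by
  simp [Wseries, uk, Dk]

lemma constantCoeff_Dk (k : ℕ) : PowerSeries.constantCoeff (Dk k) = 1 := by
  simp [Dk, map_sub, map_pow, map_prod]

lemma Dk_mul_uk (k : ℕ) : Dk k * uk k = 1 :=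
  PowerSeries.mul_invOfUnit _ 1 (by rw [constantCoeff_Dk]; rfl)

lemma Dk_ne_zero (k : ℕ) : Dk k ≠ 0 := by
  intro h
  have := Dk_mul_uk k
  rw [h, zero_mul] at this
  exact one_ne_zero this.symm

lemma uk_succ (k : ℕ) : uk k = (1 - PowerSeries.X ^ (2 ^ k)) * uk (k + 1) := by
  have h1 : Dk k * ((1 - PowerSeries.X ^ (2 ^ k)) * uk (k + 1)) = 1 := by
    have : Dk k * (1 - PowerSeries.X ^ (2 ^ k)) = Dk (k + 1) := by
      rw [Dk, Dk, Finset.prod_range_succ]; ring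
    rw [← mul_assoc, this, Dk_mul_uk]
  exact mul_left_cancel₀ (Dk_ne_zero k) (by rw [Dk_mul_uk, h1])

noncomputable def ck (k n : ℕ) : ℤ := PowerSeries.coeff (R := ℤ) n (uk k)

lemma ck_rec (k n : ℕ) :
    ck k n = ck (k + 1) n - if 2 ^ k ≤ n then ck (k + 1) (n - 2 ^ k) else 0 := by
  have := congrArg (PowerSeries.coeff (R := ℤ) n) (uk_succ k)
  rw [sub_mul, one_mul, map_sub, PowerSeries.coeff_X_pow_mul'] at this
  simpa [ck] using this

lemma ck_zero (n : ℕ) : ck 0 n = 1 := by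
  have key : uk 0 = PowerSeries.mk (fun _ => (1 : ℤ)) := by
    have h1 : Dk 0 * PowerSeries.mk (fun _ => (1 : ℤ)) = 1 := by
      ext n
      rw [Dk]
      simp only [Finset.range_zero, Finset.prod_empty, mul_one, sub_mul, one_mul, map_sub]
      rcases n with _ | n
      · simp
      · simp [PowerSeries.coeff_succ_X_mul, PowerSeries.coeff_mk, PowerSeries.coeff_one]
    exact mul_left_cancel₀ (Dk_ne_zero 0) (by rw [Dk_mul_uk, h1])
  simp [ck, key]

lemma ck_at_zero (k : ℕ) : ck k 0 = 1 := by
  simp [ck, uk, PowerSeries.coeff_zero_eq_constantCoeff,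
    PowerSeries.constantCoeff_invOfUnit]

lemma two_pow_pos (i : ℕ) : 1 ≤ 2 ^ i := Nat.one_le_two_pow

/-- key halving identity -/
lemma ck_half (i : ℕ) : ∀ n : ℕ,
    ck (i + 1) n - (if 1 ≤ n then ck (i + 1) (n - 1) else 0) = ck i (n / 2) := by
  induction i with
  | zero =>
    intro n
    have h := ck_rec 0 n
    simp only [pow_zero] at h
    rw [← h, ck_zero, ck_zero]
  | succ i ih =>
    intro n
    induction n using Nat.strong_induction_on with
    | _ n ihn =>
    rcases Nat.eq_zero_or_pos n with rfl | hn
    · simp [ck_at_zero]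
    rw [if_pos (show 1 ≤ n from hn)]
    have h1 := ck_rec (i + 1) n
    have h2 := ck_rec (i + 1) (n - 1)
    have e1 : ck (i + 2) n = ck (i + 1) n + (if 2 ^ (i + 1) ≤ n then ck (i + 2) (n - 2 ^ (i + 1)) else 0) := by
      rw [h1]; ring
    have e2 : ck (i + 2) (n - 1) = ck (i + 1) (n - 1) +
        (if 2 ^ (i + 1) ≤ n - 1 then ck (i + 2) (n - 1 - 2 ^ (i + 1)) else 0) := by
      rw [h2]; ring
    rw [e1, e2]
    have hout : ck (i + 1) n - ck (i + 1) (n - 1) = ck i (n / 2) := by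
      have := ih n
      rwa [if_pos (show 1 ≤ n from hn)] at this
    by_cases hbig : 2 ^ (i + 1) ≤ n
    · have hhalf : 2 ^ i ≤ n / 2 := by
        have : 2 ^ (i + 1) = 2 * 2 ^ i := by ring
        omega
      have hm : n - 2 ^ (i + 1) < n := by
        have := two_pow_pos (i + 1); omega
      have hif : (if 2 ^ (i + 1) ≤ n - 1 then ck (i + 2) (n - 1 - 2 ^ (i + 1)) else 0)
          = (if 1 ≤ n - 2 ^ (i + 1) then ck (i + 2) (n - 2 ^ (i + 1) - 1) else 0) := by
        have harg : n - 1 - 2 ^ (i + 1) = n - 2 ^ (i + 1) - 1 := by omega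
        rw [harg]
        by_cases h' : 2 ^ (i + 1) ≤ n - 1
        · rw [if_pos h', if_pos (by omega)]
        · rw [if_neg h', if_neg (by omega)]
      have hinner := ihn (n - 2 ^ (i + 1)) hm
      have hdiv : (n - 2 ^ (i + 1)) / 2 = n / 2 - 2 ^ i := by
        have : 2 ^ (i + 1) = 2 * 2 ^ i := by ring
        omega
      have hrhs := ck_rec i (n / 2)
      rw [if_pos hhalf] at hrhs
      have hrhs' : ck (i + 1) (n / 2) = ck i (n / 2) + ck (i + 1) (n / 2 - 2 ^ i) := by
        rw [hrhs]; ring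
      rw [if_pos hbig, hif, hrhs']
      have : ck (i + 1) n + ck (i + 2) (n - 2 ^ (i + 1)) -
          (ck (i + 1) (n - 1) + (if 1 ≤ n - 2 ^ (i + 1) then ck (i + 2) (n - 2 ^ (i + 1) - 1) else 0))
          = (ck (i + 1) n - ck (i + 1) (n - 1)) + (ck (i + 2) (n - 2 ^ (i + 1)) -
            (if 1 ≤ n - 2 ^ (i + 1) then ck (i + 2) (n - 2 ^ (i + 1) - 1) else 0)) := by ring
      rw [this, hout, hinner, hdiv]
    · have hsmall' : ¬ 2 ^ (i + 1) ≤ n - 1 := by omega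
      have hhalf : ¬ 2 ^ i ≤ n / 2 := by
        have : 2 ^ (i + 1) = 2 * 2 ^ i := by ring
        omega
      have hrhs := ck_rec i (n / 2)
      rw [if_neg hhalf, sub_zero] at hrhs
      rw [if_neg hbig, if_neg hsmall', ← hrhs]
      rw [add_zero, add_zero, hout]

/-- coefficient of Wseries (i+2) -/
noncomputable def fk (i n : ℕ) : ℤ := PowerSeries.coeff (R := ℤ) n (Wseries (i + 2))

lemma fk_eq (i n : ℕ) : fk i n =
    (if 2 ^ (i + 1) ≤ n then ck i (n - 2 ^ (i + 1)) else 0) +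
    (if 2 ^ (i + 1) + 2 ^ i ≤ n then ck i (n - (2 ^ (i + 1) + 2 ^ i)) else 0) := by
  have : Wseries (i + 2) = PowerSeries.X ^ (2 ^ (i + 1)) * uk i +
      PowerSeries.X ^ (2 ^ (i + 1) + 2 ^ i) * uk i := by
    rw [Wseries_eq, pow_add]; ring
  rw [fk, this, map_add, PowerSeries.coeff_X_pow_mul', PowerSeries.coeff_X_pow_mul']
  rfl

lemma fk_half (i : ℕ) (n : ℕ) :
    fk (i + 1) n - (if 1 ≤ n then fk (i + 1) (n - 1) else 0) = fk i (n / 2) := by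
  have key : ∀ s : ℕ, 0 < s →
      (if 2 * s ≤ n then ck (i + 1) (n - 2 * s) else 0) -
      (if 2 * s ≤ n - 1 ∧ 1 ≤ n then ck (i + 1) (n - 1 - 2 * s) else 0) =
      (if s ≤ n / 2 then ck i (n / 2 - s) else 0) := by
    intro s hs
    split_ifs with h1 h2 h3 h3 h2 h3 h3
    · have hle : 1 ≤ n - 2 * s := by omega
      have := ck_half i (n - 2 * s)
      rw [if_pos hle] at this
      have e1 : n - 2 * s - 1 = n - 1 - 2 * s := by omega
      have e2 : (n - 2 * s) / 2 = n / 2 - s := by omega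
      rw [e1, e2] at this
      exact this
    · exact absurd (by omega : s ≤ n / 2) h3
    · have e1 : n - 2 * s = 0 := by omega
      have e2 : n / 2 - s = 0 := by omega
      rw [e1, e2, ck_at_zero, ck_at_zero, sub_zero]
    · exact absurd (by omega : s ≤ n / 2) h3
    · exact absurd (by omega : 2 * s ≤ n) h1
    · exact absurd (by omega : 2 * s ≤ n) h1
    · exact absurd (by omega : 2 * s ≤ n) h1
    · ring
  have k1 := key (2 ^ (i + 1)) (two_pow_pos _)
  have k2 := key (2 ^ (i + 1) + 2 ^ i) (by have := two_pow_pos i; omega)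
  have p1 : 2 * 2 ^ (i + 1) = 2 ^ (i + 1 + 1) := by ring
  have p2 : 2 * (2 ^ (i + 1) + 2 ^ i) = 2 ^ (i + 1 + 1) + 2 ^ (i + 1) := by ring
  rw [p1] at k1
  rw [p2] at k2
  have hsplit : (if 1 ≤ n then fk (i + 1) (n - 1) else 0) =
      (if 2 ^ (i + 1 + 1) ≤ n - 1 ∧ 1 ≤ n then ck (i + 1) (n - 1 - 2 ^ (i + 1 + 1)) else 0) +
      (if 2 ^ (i + 1 + 1) + 2 ^ (i + 1) ≤ n - 1 ∧ 1 ≤ n then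
        ck (i + 1) (n - 1 - (2 ^ (i + 1 + 1) + 2 ^ (i + 1))) else 0) := by
    by_cases hn : 1 ≤ n
    · rw [if_pos hn, fk_eq]
      congr 1
      · by_cases h' : 2 ^ (i + 1 + 1) ≤ n - 1
        · rw [if_pos h', if_pos ⟨h', hn⟩]
        · rw [if_neg h', if_neg (by tauto)]
      · by_cases h' : 2 ^ (i + 1 + 1) + 2 ^ (i + 1) ≤ n - 1
        · rw [if_pos h', if_pos ⟨h', hn⟩]
        · rw [if_neg h', if_neg (by tauto)]
    · rw [if_neg hn, if_neg (by tauto), if_neg (by tauto)]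
      ring
  rw [hsplit, fk_eq, fk_eq]
  have hmul : 2 * (2 ^ i) = 2 ^ (i + 1) := by ring
  calc (if 2 ^ (i + 1 + 1) ≤ n then ck (i + 1) (n - 2 ^ (i + 1 + 1)) else 0) +
        (if 2 ^ (i + 1 + 1) + 2 ^ (i + 1) ≤ n then
          ck (i + 1) (n - (2 ^ (i + 1 + 1) + 2 ^ (i + 1))) else 0) -
        ((if 2 ^ (i + 1 + 1) ≤ n - 1 ∧ 1 ≤ n then ck (i + 1) (n - 1 - 2 ^ (i + 1 + 1)) else 0) +
        (if 2 ^ (i + 1 + 1) + 2 ^ (i + 1) ≤ n - 1 ∧ 1 ≤ n then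
          ck (i + 1) (n - 1 - (2 ^ (i + 1 + 1) + 2 ^ (i + 1))) else 0))
      = ((if 2 ^ (i + 1 + 1) ≤ n then ck (i + 1) (n - 2 ^ (i + 1 + 1)) else 0) -
          (if 2 ^ (i + 1 + 1) ≤ n - 1 ∧ 1 ≤ n then ck (i + 1) (n - 1 - 2 ^ (i + 1 + 1)) else 0)) +
        ((if 2 ^ (i + 1 + 1) + 2 ^ (i + 1) ≤ n then
            ck (i + 1) (n - (2 ^ (i + 1 + 1) + 2 ^ (i + 1))) else 0) -
          (if 2 ^ (i + 1 + 1) + 2 ^ (i + 1) ≤ n - 1 ∧ 1 ≤ n then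
            ck (i + 1) (n - 1 - (2 ^ (i + 1 + 1) + 2 ^ (i + 1))) else 0)) := by ring
    _ = (if 2 ^ (i + 1) ≤ n / 2 then ck i (n / 2 - 2 ^ (i + 1)) else 0) +
        (if 2 ^ (i + 1) + 2 ^ i ≤ n / 2 then ck i (n / 2 - (2 ^ (i + 1) + 2 ^ i)) else 0) := by
      rw [k1, k2]

lemma fk_zero_of_big (i n : ℕ) (h : n < 2 ^ (i + 1)) : fk i n = 0 := by
  rw [fk_eq, if_neg (by omega), if_neg (by have := two_pow_pos i; omega)]
  ring

lemma fk0 (n : ℕ) : fk 0 n = (if 2 ≤ n then 1 else 0) + (if 3 ≤ n then 1 else 0) := by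
  rw [fk_eq]
  norm_num [ck_zero]

section Wfacts

variable (w : ℕ → ℤ)
    (hw : ∀ n : ℕ, w n = ∑' i : ℕ, PowerSeries.coeff (R := ℤ) n (Wseries (i + 2)))

include hw

lemma w_eq_sum (n K : ℕ) (hK : n ≤ K) : w n = ∑ i ∈ Finset.range K, fk i n := by
  rw [hw n]
  apply tsum_eq_sum
  intro i hi
  rw [Finset.mem_range, not_lt] at hi
  apply fk_zero_of_big
  calc n ≤ K := hK
    _ ≤ i := hi
    _ < 2 ^ (i + 1) := by
        calc i < 2 ^ i := Nat.lt_two_pow_self (n := i)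
          _ ≤ 2 ^ (i + 1) := Nat.pow_le_pow_right (by norm_num) (by omega)

lemma w_two : w 2 = 1 := by
  rw [w_eq_sum w hw 2 2 le_rfl]
  rw [Finset.sum_range_succ, Finset.sum_range_one, fk0,
    fk_zero_of_big 1 2 (by norm_num)]
  norm_num

lemma w_three : w 3 = 2 := by
  rw [w_eq_sum w hw 3 3 le_rfl]
  rw [Finset.sum_range_succ, Finset.sum_range_succ, Finset.sum_range_one, fk0,
    fk_zero_of_big 1 3 (by norm_num), fk_zero_of_big 2 3 (by norm_num)]
  norm_num

lemma w_rec (n : ℕ) (hn : 4 ≤ n) : w n = w (n - 1) + w (n / 2) := by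
  rcases Nat.exists_eq_add_of_le (show 1 ≤ n by omega) with ⟨K, hKn⟩
  have hKn : n = K + 1 := by omega
  have h1 : w n = ∑ i ∈ Finset.range (K + 1), fk i n := w_eq_sum w hw n (K + 1) (by omega)
  have h2 : w (n - 1) = ∑ i ∈ Finset.range (K + 1), fk i (n - 1) :=
    w_eq_sum w hw (n - 1) (K + 1) (by omega)
  have h3 : w (n / 2) = ∑ i ∈ Finset.range K, fk i (n / 2) :=
    w_eq_sum w hw (n / 2) K (by omega)
  have key : ∑ i ∈ Finset.range (K + 1), (fk i n - fk i (n - 1)) =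
      ∑ i ∈ Finset.range K, fk i (n / 2) := by
    rw [Finset.sum_range_succ']
    have h0 : fk 0 n - fk 0 (n - 1) = 0 := by
      rw [fk0, fk0, if_pos (by omega), if_pos (by omega), if_pos (by omega),
        if_pos (by omega)]
      ring
    rw [h0, add_zero]
    apply Finset.sum_congr rfl
    intro i _
    have := fk_half i n
    rwa [if_pos (by omega : 1 ≤ n)] at this
  have : w n - w (n - 1) = w (n / 2) := by
    rw [h1, h2, h3, ← Finset.sum_sub_distrib, key]
  linarith

end Wfacts


def bitz (m i : ℕ) : ℤ := if m.testBit i then 1 else 0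

/-- The RHS of the main theorem, as a function. -/
def Rf (n : ℕ) : ℤ :=
  2 + 2 * ((padicValNat 2 n / 2 : ℕ) : ℤ)
    + 2 * (if padicValNat 2 n % 2 = 0 then (1 : ℤ) else 0) *
        (1 - 2 * bitz n (padicValNat 2 n + 1)) *
        ((Nat.log 2 n : ℤ) - padicValNat 2 n - 1)
    + 4 * (if padicValNat 2 n % 2 = 1 then (1 : ℤ) else 0) *
        ((Nat.log 2 n : ℤ) - padicValNat 2 n)
    + 4 * (if padicValNat 2 n % 2 = 0 then (1 : ℤ) else 0) *
        ((Nat.log 2 n : ℤ) *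
            (∑ i ∈ Finset.Icc (padicValNat 2 n + 2)
                (Nat.log 2 n - if Nat.log 2 n % 2 = 0 then 1 else 0), bitz n i)
          + (padicValNat 2 n : ℤ) * bitz n (padicValNat 2 n + 2)
          + ∑ t ∈ Finset.Icc ((padicValNat 2 n + 4) / 2) ((Nat.log 2 n + 1) / 2),
              bitz n (2 * t - 1))

/-- (Rf (2m+1) - 2)/2, in terms of the digits of m. -/
def Cf (m : ℕ) : ℤ :=
  (1 - 2 * bitz m 0) * (Nat.log 2 m : ℤ)
    + 2 * (((Nat.log 2 m : ℤ) + 1) *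
        (∑ i ∈ Finset.Icc 1 (Nat.log 2 m - if Nat.log 2 m % 2 = 1 then 1 else 0), bitz m i)
      + ∑ t ∈ Finset.Icc 1 (Nat.log 2 m / 2), bitz m (2 * t))

-- basic plumbing
lemma bitz_shift (m r i : ℕ) (hr : r ≤ 1) : bitz (2 * m + r) (i + 1) = bitz m i := by
  have : (2 * m + r) / 2 = m := by omega
  rw [bitz, Nat.testBit_add_one, this, bitz]

lemma bitz_zero_bit (m r : ℕ) (hr : r ≤ 1) : bitz (2 * m + r) 0 = (r : ℤ) := by
  rw [bitz, Nat.testBit_zero]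
  rcases Nat.le_one_iff_eq_zero_or_eq_one.mp hr with rfl | rfl
  · norm_num
  · norm_num

lemma log_two_mul (m : ℕ) (hm : 1 ≤ m) (r : ℕ) (hr : r ≤ 1) :
    Nat.log 2 (2 * m + r) = Nat.log 2 m + 1 := by
  apply Nat.log_eq_of_pow_le_of_lt_pow
  · have := Nat.pow_log_le_self 2 (show m ≠ 0 by omega)
    rw [pow_succ]
    omega
  · have := Nat.lt_pow_succ_log_self (show 1 < 2 by norm_num) m
    rw [pow_succ, pow_succ]
    omega

lemma padic_two_mul (m : ℕ) (hm : 1 ≤ m) :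
    padicValNat 2 (2 * m) = padicValNat 2 m + 1 := by
  rw [padicValNat.mul (by norm_num) (by omega), padicValNat.self (by norm_num)]
  omega

lemma padic_odd (m : ℕ) : padicValNat 2 (2 * m + 1) = 0 :=
  padicValNat.eq_zero_of_not_dvd (by omega)

lemma sum_Icc_shift (g : ℕ → ℤ) (a b : ℕ) :
    ∑ i ∈ Finset.Icc (a + 1) (b + 1), g i = ∑ i ∈ Finset.Icc a b, g (i + 1) := by
  rw [← Finset.map_add_right_Icc, Finset.sum_map]
  rfl

lemma bitz_top (m : ℕ) (hm : 1 ≤ m) : bitz m (Nat.log 2 m) = 1 := by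
  rw [bitz, Nat.testBit_eq_decide_div_mod_eq]
  have h1 := Nat.pow_log_le_self 2 (show m ≠ 0 by omega)
  have h2 := Nat.lt_pow_succ_log_self (show 1 < 2 by norm_num) m
  rw [pow_succ] at h2
  have : m / 2 ^ Nat.log 2 m = 1 :=
    Nat.div_eq_of_lt_le (by omega) (by omega)
  rw [this]
  norm_num

lemma bitz_big (m i : ℕ) (h : Nat.log 2 m < i) (hm : 1 ≤ m) : bitz m i = 0 := by
  rw [bitz, Nat.testBit_eq_decide_div_mod_eq]
  have h2 := Nat.lt_pow_succ_log_self (show 1 < 2 by norm_num) m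
  have : m < 2 ^ i := lt_of_lt_of_le h2 (Nat.pow_le_pow_right (by norm_num) (by omega))
  have : m / 2 ^ i = 0 := Nat.div_eq_of_lt this
  rw [this]
  norm_num

lemma bitz_low (m i : ℕ) (h : i < padicValNat 2 m) : bitz m i = 0 := by
  rw [bitz, Nat.testBit_eq_decide_div_mod_eq]
  obtain ⟨q, hq⟩ := pow_padicValNat_dvd (p := 2) (n := m)
  set v := padicValNat 2 m with hv
  have hdd : m / 2 ^ i = 2 ^ (v - i) * q := by
    have hm2 : m = 2 ^ i * (2 ^ (v - i) * q) := by
      rw [hq, ← mul_assoc, ← pow_add]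
      congr 2
      omega
    rw [hm2, Nat.mul_div_cancel_left _ (Nat.two_pow_pos i)]
  rw [hdd]
  have h2 : 2 ^ (v - i) * q % 2 = 0 := by
    have hd : (2:ℕ) ∣ 2 ^ (v - i) := dvd_pow_self 2 (by omega)
    obtain ⟨z, hz⟩ := hd
    rw [hz, mul_assoc]
    exact Nat.mul_mod_right 2 (z * q)
  rw [h2]
  norm_num

lemma bitz_val (m : ℕ) (hm : 1 ≤ m) : bitz m (padicValNat 2 m) = 1 := by
  rw [bitz, Nat.testBit_eq_decide_div_mod_eq]
  have hnd := pow_succ_padicValNat_not_dvd (p := 2) (n := m) (by omega)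
  obtain ⟨q, hq⟩ := pow_padicValNat_dvd (p := 2) (n := m)
  set v := padicValNat 2 m with hv
  have hdiv : m / 2 ^ v = q := by
    rw [hq, mul_comm]
    exact Nat.mul_div_cancel _ (Nat.two_pow_pos _)
  rw [hdiv]
  have hq1 : q % 2 = 1 := by
    rcases Nat.even_or_odd q with he | ho
    · exfalso
      obtain ⟨r, hr⟩ := he
      refine hnd ⟨r, ?_⟩
      rw [hq, hr, pow_succ]
      ring
    · obtain ⟨r, hr⟩ := ho
      omega
  rw [hq1]
  norm_num

lemma padic_le_log (m : ℕ) (hm : 1 ≤ m) : padicValNat 2 m ≤ Nat.log 2 m := by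
  by_contra h
  have := bitz_val m hm
  rw [bitz_big m _ (by omega) hm] at this
  norm_num at this

lemma padic_lt_log (m : ℕ) (hm : 1 ≤ m) (hnp : ¬∃ c : ℕ, m = 2 ^ c) :
    padicValNat 2 m < Nat.log 2 m := by
  rcases Nat.lt_or_ge (padicValNat 2 m) (Nat.log 2 m) with h | h
  · exact h
  exfalso
  apply hnp
  refine ⟨padicValNat 2 m, ?_⟩
  have hle := padic_le_log m hm
  have heq : padicValNat 2 m = Nat.log 2 m := by omega
  obtain ⟨q, hq⟩ := pow_padicValNat_dvd (p := 2) (n := m)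
  have h1 := Nat.lt_pow_succ_log_self (show 1 < 2 by norm_num) m
  rw [← heq, pow_succ] at h1
  set v := padicValNat 2 m with hv
  have hq1 : q = 1 := by
    have hpos : 0 < 2 ^ v := Nat.two_pow_pos _
    nlinarith [hq, h1, hpos]
  rw [hq, hq1, mul_one]

lemma padic_pow (c : ℕ) : padicValNat 2 (2 ^ c) = c := by
  induction c with
  | zero => simp
  | succ c ih =>
    rw [pow_succ, mul_comm, padic_two_mul _ (Nat.two_pow_pos _), ih]

lemma log_pow (c : ℕ) : Nat.log 2 (2 ^ c) = c := Nat.log_pow (by norm_num) c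

lemma sum_Icc_shift' (g h : ℕ → ℤ) (a b a' b' : ℕ) (ha : a = a' + 1) (hb : b = b' + 1)
    (hg : ∀ i, h i = g (i + 1)) :
    ∑ i ∈ Finset.Icc a b, g i = ∑ i ∈ Finset.Icc a' b', h i := by
  subst ha hb
  rw [sum_Icc_shift]
  exact Finset.sum_congr rfl fun i _ => (hg i).symm

lemma sum_Icc_shift'' (g h : ℕ → ℤ) (a b a' b' : ℕ) (ha : a = a' + 1) (hb' : b' = b - 1)
    (hbb : 1 ≤ b) (hg : ∀ i, h i = g (i + 1)) :
    ∑ i ∈ Finset.Icc a b, g i = ∑ i ∈ Finset.Icc a' b', h i :=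
  sum_Icc_shift' g h a b a' b' ha (by omega) hg

lemma sum_Icc_zero_split (g : ℕ → ℤ) (b : ℕ) :
    ∑ i ∈ Finset.Icc 0 b, g i = g 0 + ∑ i ∈ Finset.Icc 1 b, g i := by
  induction b with
  | zero => simp
  | succ b ih =>
    rw [Finset.sum_Icc_succ_top (by omega), Finset.sum_Icc_succ_top (by omega), ih]
    ring

/-- split a sum over [1,e] into even and odd positions -/
lemma sum_parity_split (g : ℕ → ℤ) (e : ℕ) :
    ∑ i ∈ Finset.Icc 1 e, g i =
      (∑ t ∈ Finset.Icc 1 (e / 2), g (2 * t)) +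
      (∑ t ∈ Finset.Icc 1 ((e + 1) / 2), g (2 * t - 1)) := by
  induction e with
  | zero => simp
  | succ e ih =>
    rcases Nat.even_or_odd e with ⟨k, rfl⟩ | ⟨k, rfl⟩
    · rw [show (k + k + 1) / 2 = k by omega, show (k + k + 1 + 1) / 2 = k + 1 by omega]
      rw [show (k + k) / 2 = k by omega, show (k + k + 1) / 2 = k by omega] at ih
      rw [Finset.sum_Icc_succ_top (by omega) g, ih,
        Finset.sum_Icc_succ_top (by omega) (fun t => g (2 * t - 1))]
      rw [show 2 * (k + 1) - 1 = k + k + 1 by omega]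
      ring
    · rw [show (2 * k + 1 + 1) / 2 = k + 1 by omega, show (2 * k + 1 + 1 + 1) / 2 = k + 1 by omega]
      rw [show (2 * k + 1) / 2 = k by omega, show (2 * k + 1 + 1) / 2 = k + 1 by omega] at ih
      rw [Finset.sum_Icc_succ_top (by omega) g, ih,
        Finset.sum_Icc_succ_top (by omega) (fun t => g (2 * t))]
      rw [show 2 * (k + 1) = 2 * k + 1 + 1 by omega]
      ring

def Sig (m : ℕ) : ℤ := ∑ i ∈ Finset.Icc 1 (Nat.log 2 m), bitz m i
def Oev (m : ℕ) : ℤ := ∑ t ∈ Finset.Icc 1 (Nat.log 2 m / 2), bitz m (2 * t)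
def Ood (m : ℕ) : ℤ := ∑ t ∈ Finset.Icc 1 ((Nat.log 2 m + 1) / 2), bitz m (2 * t - 1)

lemma Sig_split (m : ℕ) : Sig m = Oev m + Ood m := sum_parity_split _ _

lemma Cf_eq (m : ℕ) (hm : 1 ≤ m) :
    Cf m = (1 - 2 * bitz m 0) * (Nat.log 2 m : ℤ) +
      2 * (((Nat.log 2 m : ℤ) + 1) *
          (Sig m - (if Nat.log 2 m % 2 = 1 then 1 else 0)) + Oev m) := by
  rw [Cf]
  rcases Nat.even_or_odd (Nat.log 2 m) with he | he
  · have h1 : Nat.log 2 m % 2 = 0 := by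
      obtain ⟨k, hk⟩ := he
      omega
    rw [h1]
    norm_num [Sig, Oev]
  · have h1 : Nat.log 2 m % 2 = 1 := by
      obtain ⟨k, hk⟩ := he
      omega
    have h2 : 1 ≤ Nat.log 2 m := by omega
    rw [h1]
    have hsig : Sig m = (∑ i ∈ Finset.Icc 1 (Nat.log 2 m - 1), bitz m i) + 1 := by
      rw [Sig, show Nat.log 2 m = (Nat.log 2 m - 1) + 1 by omega,
        Finset.sum_Icc_succ_top (by omega)]
      rw [show Nat.log 2 m - 1 + 1 = Nat.log 2 m by omega, bitz_top m hm]
    rw [hsig, Oev]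
    norm_num

lemma Sig_double (m r : ℕ) (hm : 1 ≤ m) (hr : r ≤ 1) :
    Sig (2 * m + r) = bitz m 0 + Sig m := by
  rw [Sig, Sig, log_two_mul m hm r hr,
    sum_Icc_shift' (bitz (2 * m + r)) (bitz m) 1 (Nat.log 2 m + 1) 0 (Nat.log 2 m) rfl rfl
      (fun i => (bitz_shift m r i hr).symm),
    sum_Icc_zero_split]

lemma Oev_double (m r : ℕ) (hm : 1 ≤ m) (hr : r ≤ 1) : Oev (2 * m + r) = Ood m := by
  rw [Oev, Ood, log_two_mul m hm r hr]
  apply Finset.sum_congr rfl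
  intro t ht
  rw [Finset.mem_Icc] at ht
  have h2t : 2 * t = (2 * t - 1) + 1 := by omega
  conv_lhs => rw [h2t]
  exact bitz_shift m r _ hr

lemma Rodd (m : ℕ) (hm : 1 ≤ m) : Rf (2 * m + 1) = 2 + 2 * Cf m := by
  have hlog := log_two_mul m hm 1 (le_refl 1)
  have hpad := padic_odd m
  set e := Nat.log 2 m with he
  have hs2 : ∑ t ∈ Finset.Icc ((0 + 4) / 2) ((e + 1 + 1) / 2), bitz (2 * m + 1) (2 * t - 1)
      = ∑ t ∈ Finset.Icc 1 (e / 2), bitz m (2 * t) := by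
    apply sum_Icc_shift' _ _ _ _ _ _ (by norm_num) (by omega)
    intro s
    rw [show 2 * (s + 1) - 1 = 2 * s + 1 by omega]
    exact (bitz_shift m 1 (2 * s) (le_refl 1)).symm
  have hs1 : ∑ i ∈ Finset.Icc (0 + 2) (e + 1 - if (e + 1) % 2 = 0 then 1 else 0),
        bitz (2 * m + 1) i
      = ∑ i ∈ Finset.Icc 1 (e - if e % 2 = 1 then 1 else 0), bitz m i := by
    rcases Nat.even_or_odd e with ⟨k, hk⟩ | ⟨k, hk⟩
    · rw [if_neg (by omega), if_neg (by omega)]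
      exact sum_Icc_shift' _ _ _ _ _ _ (by norm_num) (by omega)
        (fun i => (bitz_shift m 1 i (le_refl 1)).symm)
    · rw [if_pos (by omega), if_pos (by omega)]
      exact sum_Icc_shift' _ _ _ _ _ _ (by norm_num) (by omega)
        (fun i => (bitz_shift m 1 i (le_refl 1)).symm)
  rw [Rf, Cf, hpad, hlog, ← he, hs1, hs2]
  rw [show (0 : ℕ) + 1 = 1 from rfl, show bitz (2 * m + 1) 1 = bitz m 0 from
    bitz_shift m 1 0 (le_refl 1)]
  norm_num
  push_cast
  ring

lemma Cf_double0 (m : ℕ) (hm : 1 ≤ m) : Cf (2 * m) ≡ 1 + Cf m [ZMOD 4] := by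
  have hS := Sig_double m 0 hm (by norm_num)
  have hO := Oev_double m 0 hm (by norm_num)
  have hlog := log_two_mul m hm 0 (by norm_num)
  have hb0 := bitz_zero_bit m 0 (by norm_num)
  norm_num at hS hO hlog hb0
  rw [Int.ModEq]
  rw [Cf_eq (2 * m) (by omega), Cf_eq m hm, hS, hO, hlog, hb0, Sig_split m]
  rw [← Int.ModEq]
  obtain ⟨p, u, hp, hu⟩ : ∃ p u, p ≤ 1 ∧ Nat.log 2 m = 2 * u + p :=
    ⟨Nat.log 2 m % 2, Nat.log 2 m / 2, by omega, by omega⟩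
  rw [hu]
  rcases Nat.le_one_iff_eq_zero_or_eq_one.mp hp with rfl | rfl
  · rw [if_pos (show (2 * u + 0 + 1) % 2 = 1 by omega),
      if_neg (show ¬((2 * u + 0) % 2 = 1) by omega)]
    rw [Int.modEq_iff_dvd]
    refine ⟨1 - Ood m - bitz m 0 + u - 2 * u * bitz m 0, ?_⟩
    push_cast
    ring
  · rw [if_neg (show ¬((2 * u + 1 + 1) % 2 = 1) by omega),
      if_pos (show (2 * u + 1) % 2 = 1 by omega)]
    rw [Int.modEq_iff_dvd]
    refine ⟨-1 - Ood m - 2 * bitz m 0 - u - 2 * u * bitz m 0, ?_⟩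
    push_cast
    ring

lemma Cf_double1 (m : ℕ) (hm : 1 ≤ m) : Cf (2 * m + 1) ≡ 3 - Cf m [ZMOD 4] := by
  have hS := Sig_double m 1 hm (by norm_num)
  have hO := Oev_double m 1 hm (by norm_num)
  have hlog := log_two_mul m hm 1 (by norm_num)
  have hb0 := bitz_zero_bit m 1 (by norm_num)
  norm_num at hb0
  rw [Int.ModEq]
  rw [Cf_eq (2 * m + 1) (by omega), Cf_eq m hm, hS, hO, hlog, hb0, Sig_split m]
  rw [← Int.ModEq]
  obtain ⟨p, u, hp, hu⟩ : ∃ p u, p ≤ 1 ∧ Nat.log 2 m = 2 * u + p :=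
    ⟨Nat.log 2 m % 2, Nat.log 2 m / 2, by omega, by omega⟩
  rw [hu]
  rcases Nat.le_one_iff_eq_zero_or_eq_one.mp hp with rfl | rfl
  · rw [if_pos (show (2 * u + 0 + 1) % 2 = 1 by omega),
      if_neg (show ¬((2 * u + 0) % 2 = 1) by omega)]
    rw [Int.modEq_iff_dvd]
    refine ⟨2 - 2 * Ood m - 2 * Oev m - bitz m 0 + u - 2 * u * Ood m - 2 * u * Oev m, ?_⟩
    push_cast
    ring
  · rw [if_neg (show ¬((2 * u + 1 + 1) % 2 = 1) by omega),
      if_pos (show (2 * u + 1) % 2 = 1 by omega)]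
    rw [Int.modEq_iff_dvd]
    refine ⟨2 - 3 * Ood m - 3 * Oev m - bitz m 0 + u - 2 * u * Ood m - 2 * u * Oev m, ?_⟩
    push_cast
    ring

lemma sum_Icc_split (g : ℕ → ℤ) (a b c : ℕ) (h1 : a ≤ b + 1) (h2 : b ≤ c) :
    ∑ i ∈ Finset.Icc a c, g i =
      (∑ i ∈ Finset.Icc a b, g i) + ∑ i ∈ Finset.Icc (b + 1) c, g i := by
  have hset : Finset.Icc a c = Finset.Icc a b ∪ Finset.Icc (b + 1) c := by
    ext x
    simp only [Finset.mem_Icc, Finset.mem_union]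
    omega
  rw [hset, Finset.sum_union]
  rw [Finset.disjoint_left]
  intro x hx hy
  rw [Finset.mem_Icc] at hx hy
  omega

lemma sum_low_one (m a : ℕ) (h_low : ∀ i, i < a → bitz m i = 0) (h_a : bitz m a = 1)
    (ha : 1 ≤ a) : ∑ i ∈ Finset.Icc 1 a, bitz m i = 1 := by
  obtain ⟨b, rfl⟩ : ∃ b, a = b + 1 := ⟨a - 1, by omega⟩
  rw [Finset.sum_Icc_succ_top (by omega), h_a, Finset.sum_eq_zero]
  · ring
  · intro i hi
    rw [Finset.mem_Icc] at hi
    exact h_low i (by omega)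

lemma sum_odd_low (m a l : ℕ) (h_low : ∀ i, i < a → bitz m i = 0)
    (hl : 2 * l ≤ a + 2) (hl1 : 1 ≤ l) :
    ∑ t ∈ Finset.Icc 1 l, bitz m (2 * t - 1) = bitz m (2 * l - 1) := by
  obtain ⟨b, rfl⟩ : ∃ b, l = b + 1 := ⟨l - 1, by omega⟩
  rw [Finset.sum_Icc_succ_top (by omega), Finset.sum_eq_zero]
  · ring
  · intro t ht
    rw [Finset.mem_Icc] at ht
    exact h_low _ (by omega)

lemma sum_even_low (m a l : ℕ) (h_low : ∀ i, i < a → bitz m i = 0)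
    (hl : 2 * l ≤ a + 1) (hl1 : 1 ≤ l) :
    ∑ t ∈ Finset.Icc 1 l, bitz m (2 * t) = bitz m (2 * l) := by
  obtain ⟨b, rfl⟩ : ∃ b, l = b + 1 := ⟨l - 1, by omega⟩
  rw [Finset.sum_Icc_succ_top (by omega), Finset.sum_eq_zero]
  · ring
  · intro t ht
    rw [Finset.mem_Icc] at ht
    exact h_low _ (by omega)

lemma Rdouble (m : ℕ) (hm : 3 ≤ m) (hnp : ¬∃ c : ℕ, m = 2 ^ c) :
    Rf (2 * m) ≡ 2 + 2 * Cf m - Rf m [ZMOD 8] := by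
  have hm1 : 1 ≤ m := by omega
  have hlt := padic_lt_log m hm1 hnp
  have h_low : ∀ i, i < padicValNat 2 m → bitz m i = 0 := fun i hi => bitz_low m i hi
  have h_top := bitz_top m hm1
  have h_val := bitz_val m hm1
  have hpad2 : padicValNat 2 (2 * m) = padicValNat 2 m + 1 := padic_two_mul m hm1
  have hlog2 : Nat.log 2 (2 * m) = Nat.log 2 m + 1 := by
    have := log_two_mul m hm1 0 (by norm_num)
    simpa using this
  set a := padicValNat 2 m with haa
  set e := Nat.log 2 m with hee
  -- L value
  have hL : (∑ i ∈ Finset.Icc 1 a, bitz m i) = (if a = 0 then 0 else 1) := by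
    rcases Nat.eq_zero_or_pos a with h0 | h0
    · rw [h0, if_pos rfl]
      simp
    · rw [if_neg (by omega)]
      exact sum_low_one m a h_low h_val h0
  have hb0 : bitz m 0 = 1 - (if a = 0 then 0 else 1) := by
    rcases Nat.eq_zero_or_pos a with h0 | h0
    · rw [h0] at h_val
      rw [if_pos h0, h_val]
      norm_num
    · rw [if_neg (by omega), h_low 0 h0]
      ring
  have hsig : Sig m = (if a = 0 then 0 else 1) + bitz m (a + 1) +
      ∑ i ∈ Finset.Icc (a + 2) e, bitz m i := by
    rw [Sig, ← hee, sum_Icc_split (bitz m) 1 a e (by omega) (by omega), hL,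
      sum_Icc_split (bitz m) (a + 1) (a + 1) e (by omega) (by omega),
      Finset.Icc_self, Finset.sum_singleton]
    ring
  rcases Nat.even_or_odd a with ⟨v, hav⟩ | ⟨v, hav⟩
  · -- a even
    have hOod : Ood m = bitz m (a + 1) +
        ∑ t ∈ Finset.Icc (v + 2) ((e + 1) / 2), bitz m (2 * t - 1) := by
      rw [Ood, ← hee, sum_Icc_split _ 1 (v + 1) ((e + 1) / 2) (by omega) (by omega),
        sum_odd_low m a (v + 1) h_low (by omega) (by omega),
        show 2 * (v + 1) - 1 = a + 1 by omega]
    have hA1' : ∑ i ∈ Finset.Icc (a + 2) e, bitz m i =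
        Oev m + (∑ t ∈ Finset.Icc (v + 2) ((e + 1) / 2), bitz m (2 * t - 1)) -
          (if a = 0 then 0 else 1) := by
      have h1 := hsig
      rw [Sig_split, hOod] at h1
      linarith
    rcases Nat.even_or_odd e with ⟨u, heu⟩ | ⟨u, heu⟩
    · -- a even, e even
      have hext : ∑ i ∈ Finset.Icc (a + 2) e, bitz m i =
          (∑ i ∈ Finset.Icc (a + 2) (e - 1), bitz m i) + 1 := by
        have h2 := Finset.sum_Icc_succ_top (show a + 2 ≤ (e - 1) + 1 by omega) (bitz m)
        rw [show e - 1 + 1 = e by omega] at h2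
        rw [h2, h_top]
      have hA1'' : ∑ i ∈ Finset.Icc (a + 2) (e - 1), bitz m i =
          Oev m + (∑ t ∈ Finset.Icc (v + 2) ((e + 1) / 2), bitz m (2 * t - 1)) -
            (if a = 0 then 0 else 1) - 1 := by
        rw [hA1'] at hext
        linarith
      simp only [Rf]
      rw [← haa, ← hee, hpad2, hlog2]
      rw [if_neg (show ¬((a + 1) % 2 = 0) by omega), if_pos (show (a + 1) % 2 = 1 by omega),
        if_pos (show a % 2 = 0 by omega), if_neg (show ¬(a % 2 = 1) by omega),
        if_pos (show e % 2 = 0 by omega)]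
      rw [show (a + 1) / 2 = v by omega, show a / 2 = v by omega]
      rw [hA1'', show (a + 4) / 2 = v + 2 by omega]
      rw [Cf_eq m hm1, ← hee, Sig_split m, hOod, hb0, if_neg (show ¬(e % 2 = 1) by omega)]
      rw [Int.modEq_iff_dvd]
      refine ⟨Oev m + v - v * bitz m (a + 2) - v * bitz m (a + 1) - u
        + 2 * u * (if a = 0 then 0 else 1) + 2 * u * bitz m (a + 1), ?_⟩
      rw [hav, heu]
      push_cast
      ring
    · -- a even, e odd
      simp only [Rf]
      rw [← haa, ← hee, hpad2, hlog2]
      rw [if_neg (show ¬((a + 1) % 2 = 0) by omega), if_pos (show (a + 1) % 2 = 1 by omega),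
        if_pos (show a % 2 = 0 by omega), if_neg (show ¬(a % 2 = 1) by omega),
        if_neg (show ¬(e % 2 = 0) by omega)]
      rw [show (a + 1) / 2 = v by omega, show a / 2 = v by omega]
      rw [Nat.sub_zero, hA1', show (a + 4) / 2 = v + 2 by omega]
      rw [Cf_eq m hm1, ← hee, Sig_split m, hOod, hb0, if_pos (show e % 2 = 1 by omega)]
      rw [Int.modEq_iff_dvd]
      refine ⟨-(2 - (if a = 0 then 0 else 1) - Oev m - bitz m (a + 1) - v
        + v * bitz m (a + 2) + v * bitz m (a + 1) + 3 * u
        - 2 * u * (if a = 0 then 0 else 1) - 2 * u * bitz m (a + 1)), ?_⟩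
      rw [hav, heu]
      push_cast
      ring
  · -- a odd
    have hsh : ∀ i, bitz (2 * m) (i + 1) = bitz m i := by
      intro i
      have := bitz_shift m 0 i (by norm_num)
      norm_num at this
      exact this
    have hβ : bitz (2 * m) (a + 1 + 1) = bitz m (a + 1) := hsh (a + 1)
    have hγ : bitz (2 * m) (a + 1 + 2) = bitz m (a + 2) := by
      rw [show a + 1 + 2 = a + 2 + 1 by omega]
      exact hsh (a + 2)
    have hOev : Oev m = bitz m (a + 1) +
        ∑ s ∈ Finset.Icc (v + 2) (e / 2), bitz m (2 * s) := by
      rw [Oev, ← hee, sum_Icc_split _ 1 (v + 1) (e / 2) (by omega) (by omega),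
        sum_even_low m a (v + 1) h_low (by omega) (by omega),
        show 2 * (v + 1) = a + 1 by omega]
    have hB1' : ∑ i ∈ Finset.Icc (a + 2) e, bitz m i =
        Ood m + (∑ s ∈ Finset.Icc (v + 2) (e / 2), bitz m (2 * s)) - 1 := by
      have h1 := hsig
      rw [if_neg (show ¬(a = 0) by omega), Sig_split, hOev] at h1
      linarith
    have hB2shift : ∑ t ∈ Finset.Icc ((a + 1 + 4) / 2) ((e + 1 + 1) / 2),
          bitz (2 * m) (2 * t - 1)
        = ∑ s ∈ Finset.Icc (v + 2) (e / 2), bitz m (2 * s) := by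
      apply sum_Icc_shift' _ _ _ _ _ _ (by omega) (by omega)
      intro s
      rw [show 2 * (s + 1) - 1 = 2 * s + 1 by omega]
      exact (hsh (2 * s)).symm
    rcases Nat.even_or_odd e with ⟨u, heu⟩ | ⟨u, heu⟩
    · -- a odd, e even
      have hB1shift : ∑ i ∈ Finset.Icc (a + 1 + 2) (e + 1 - 0), bitz (2 * m) i
          = ∑ i ∈ Finset.Icc (a + 2) e, bitz m i := by
        apply sum_Icc_shift' _ _ _ _ _ _ (by omega) (by omega)
        intro i
        exact (hsh i).symm
      simp only [Rf]
      rw [← haa, ← hee, hpad2, hlog2]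
      rw [if_pos (show (a + 1) % 2 = 0 by omega), if_neg (show ¬((a + 1) % 2 = 1) by omega),
        if_neg (show ¬(a % 2 = 0) by omega), if_pos (show a % 2 = 1 by omega),
        if_neg (show ¬((e + 1) % 2 = 0) by omega)]
      rw [show (a + 1) / 2 = v + 1 by omega, show a / 2 = v by omega]
      rw [hB1shift, hB1', hβ, hγ, hB2shift]
      rw [Cf_eq m hm1, ← hee, Sig_split m, hOev, hb0,
        if_neg (show ¬(a = 0) by omega), if_neg (show ¬(e % 2 = 1) by omega)]
      rw [Int.modEq_iff_dvd]
      refine ⟨1 - bitz m (a + 2) + v - v * bitz m (a + 2) - v * bitz m (a + 1)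
        + 2 * u * bitz m (a + 1), ?_⟩
      rw [hav, heu]
      push_cast
      ring
    · -- a odd, e odd
      have hext : ∑ i ∈ Finset.Icc (a + 2) e, bitz m i =
          (∑ i ∈ Finset.Icc (a + 2) (e - 1), bitz m i) + 1 := by
        have h2 := Finset.sum_Icc_succ_top (show a + 2 ≤ (e - 1) + 1 by omega) (bitz m)
        rw [show e - 1 + 1 = e by omega] at h2
        rw [h2, h_top]
      have hB1'' : ∑ i ∈ Finset.Icc (a + 2) (e - 1), bitz m i =
          Ood m + (∑ s ∈ Finset.Icc (v + 2) (e / 2), bitz m (2 * s)) - 2 := by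
        rw [hB1'] at hext
        linarith
      have hB1shift : ∑ i ∈ Finset.Icc (a + 1 + 2) (e + 1 - 1), bitz (2 * m) i
          = ∑ i ∈ Finset.Icc (a + 2) (e - 1), bitz m i := by
        apply sum_Icc_shift' _ _ _ _ _ _ (by omega) (by omega)
        intro i
        exact (hsh i).symm
      simp only [Rf]
      rw [← haa, ← hee, hpad2, hlog2]
      rw [if_pos (show (a + 1) % 2 = 0 by omega), if_neg (show ¬((a + 1) % 2 = 1) by omega),
        if_neg (show ¬(a % 2 = 0) by omega), if_pos (show a % 2 = 1 by omega),
        if_pos (show (e + 1) % 2 = 0 by omega)]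
      rw [show (a + 1) / 2 = v + 1 by omega, show a / 2 = v by omega]
      rw [hB1shift, hB1'', hβ, hγ, hB2shift]
      rw [Cf_eq m hm1, ← hee, Sig_split m, hOev, hb0,
        if_neg (show ¬(a = 0) by omega), if_pos (show e % 2 = 1 by omega)]
      rw [Int.modEq_iff_dvd]
      refine ⟨1 - bitz m (a + 2) + bitz m (a + 1) + v - v * bitz m (a + 2)
        - v * bitz m (a + 1) + 2 * u * bitz m (a + 1), ?_⟩
      rw [hav, heu]
      push_cast
      ring


lemma Cf_one : Cf 1 = 0 := by
  have h1 : Nat.log 2 1 = 0 := by simp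
  rw [Cf, h1]
  norm_num

lemma two_mod4_to_mod8 {x y : ℤ} (h : x ≡ y [ZMOD 4]) : 2 * x ≡ 2 * y [ZMOD 8] := by
  have := h.mul_left' (c := 2)
  rwa [show (2 : ℤ) * 4 = 8 by norm_num] at this

section Main

variable (w : ℕ → ℤ)
    (hw : ∀ n : ℕ, w n = ∑' i : ℕ, PowerSeries.coeff (R := ℤ) n (Wseries (i + 2)))

include hw

lemma S_odd (m : ℕ) (hm : 1 ≤ m) :
    w (2 * m + 1) = 2 + 2 * ∑ k ∈ Finset.Icc 2 m, w k := by
  induction m, hm using Nat.le_induction with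
  | base =>
    rw [show 2 * 1 + 1 = 3 by norm_num, w_three w hw,
      Finset.Icc_eq_empty (by omega), Finset.sum_empty]
    ring
  | succ m hm ih =>
    have h1 : w (2 * m + 3) = w (2 * m + 2) + w (m + 1) := by
      have h := w_rec w hw (2 * m + 3) (by omega)
      rw [show 2 * m + 3 - 1 = 2 * m + 2 by omega, show (2 * m + 3) / 2 = m + 1 by omega] at h
      exact h
    have h2 : w (2 * m + 2) = w (2 * m + 1) + w (m + 1) := by
      have h := w_rec w hw (2 * m + 2) (by omega)
      rw [show 2 * m + 2 - 1 = 2 * m + 1 by omega, show (2 * m + 2) / 2 = m + 1 by omega] at h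
      exact h
    rw [show 2 * (m + 1) + 1 = 2 * m + 3 by ring, h1, h2, ih,
      Finset.sum_Icc_succ_top (show 2 ≤ m + 1 by omega)]
    ring

lemma S_even (m : ℕ) (hm : 2 ≤ m) :
    w (2 * m) = 2 + 2 * (∑ k ∈ Finset.Icc 2 m, w k) - w m := by
  have h1 : w (2 * m + 1) = w (2 * m) + w m := by
    have h := w_rec w hw (2 * m + 1) (by omega)
    rw [show 2 * m + 1 - 1 = 2 * m by omega, show (2 * m + 1) / 2 = m by omega] at h
    exact h
  have h2 := S_odd w hw m (by omega)
  linarith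

lemma S_mod (m : ℕ) (hm : 1 ≤ m) :
    ((∑ k ∈ Finset.Icc 2 (2 * m), w k) ≡ 1 + ∑ k ∈ Finset.Icc 2 m, w k [ZMOD 4]) ∧
    ((∑ k ∈ Finset.Icc 2 (2 * m + 1), w k) ≡ 3 - ∑ k ∈ Finset.Icc 2 m, w k [ZMOD 4]) := by
  induction m, hm using Nat.le_induction with
  | base =>
    have e1 : (∑ k ∈ Finset.Icc 2 (2 * 1), w k) = 1 := by
      rw [show 2 * 1 = 2 by norm_num, Finset.Icc_self, Finset.sum_singleton, w_two w hw]
    have e2 : (∑ k ∈ Finset.Icc 2 (2 * 1 + 1), w k) = 3 := by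
      rw [show 2 * 1 + 1 = 2 + 1 by norm_num, Finset.sum_Icc_succ_top (by omega),
        Finset.Icc_self, Finset.sum_singleton, w_two w hw, w_three w hw]
      norm_num
    have e3 : (∑ k ∈ Finset.Icc 2 1, w k) = 0 := by
      rw [Finset.Icc_eq_empty (by omega), Finset.sum_empty]
    rw [e1, e2, e3]
    constructor
    · rfl
    · rfl
  | succ m hm ih =>
    obtain ⟨ih1, ih2⟩ := ih
    have hsm : (∑ k ∈ Finset.Icc 2 (m + 1), w k) = (∑ k ∈ Finset.Icc 2 m, w k) + w (m + 1) :=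
      Finset.sum_Icc_succ_top (by omega) _
    have hE2 := S_even w hw (m + 1) (by omega)
    have hE1 := S_odd w hw (m + 1) (by omega)
    have hA : (∑ k ∈ Finset.Icc 2 (2 * (m + 1)), w k)
        = (∑ k ∈ Finset.Icc 2 (2 * m + 1), w k) + w (2 * (m + 1)) := by
      rw [show 2 * (m + 1) = (2 * m + 1) + 1 by ring]
      exact Finset.sum_Icc_succ_top (by omega) _
    have hB : (∑ k ∈ Finset.Icc 2 (2 * (m + 1) + 1), w k)
        = (∑ k ∈ Finset.Icc 2 (2 * (m + 1)), w k) + w (2 * (m + 1) + 1) :=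
      Finset.sum_Icc_succ_top (by omega) _
    have first : (∑ k ∈ Finset.Icc 2 (2 * (m + 1)), w k) ≡
        1 + ∑ k ∈ Finset.Icc 2 (m + 1), w k [ZMOD 4] := by
      have step : (∑ k ∈ Finset.Icc 2 (2 * (m + 1)), w k) ≡
          (3 - ∑ k ∈ Finset.Icc 2 m, w k) + w (2 * (m + 1)) [ZMOD 4] := by
        rw [hA]
        exact ih2.add_right _
      refine step.trans ?_
      rw [Int.modEq_iff_dvd]
      refine ⟨-1, ?_⟩
      rw [hE2, hsm]
      ring
    refine ⟨first, ?_⟩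
    have step : (∑ k ∈ Finset.Icc 2 (2 * (m + 1) + 1), w k) ≡
        (1 + ∑ k ∈ Finset.Icc 2 (m + 1), w k) + w (2 * (m + 1) + 1) [ZMOD 4] := by
      rw [hB]
      exact first.add_right _
    refine step.trans ?_
    rw [Int.modEq_iff_dvd]
    refine ⟨-(∑ k ∈ Finset.Icc 2 (m + 1), w k), ?_⟩
    rw [hE1]
    ring

lemma S_Cf (m : ℕ) (hm : 1 ≤ m) : (∑ k ∈ Finset.Icc 2 m, w k) ≡ Cf m [ZMOD 4] := by
  induction m using Nat.strong_induction_on with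
  | _ m ih =>
  rcases Nat.lt_or_ge m 2 with h2 | h2
  · have hm1 : m = 1 := by omega
    subst hm1
    rw [Cf_one, Finset.Icc_eq_empty (by omega), Finset.sum_empty]
  rcases Nat.even_or_odd m with ⟨k, hk⟩ | ⟨k, hk⟩
  · have hk' : m = 2 * k := by omega
    subst hk'
    have hk1 : 1 ≤ k := by omega
    have h1 := (S_mod w hw k hk1).1
    have h2' := ih k (by omega) hk1
    have h3 := Cf_double0 k hk1
    calc (∑ j ∈ Finset.Icc 2 (2 * k), w j)
        ≡ 1 + ∑ j ∈ Finset.Icc 2 k, w j [ZMOD 4] := h1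
      _ ≡ 1 + Cf k [ZMOD 4] := h2'.add_left 1
      _ ≡ Cf (2 * k) [ZMOD 4] := h3.symm
  · subst hk
    have hk1 : 1 ≤ k := by omega
    have h1 := (S_mod w hw k hk1).2
    have h2' := ih k (by omega) hk1
    have h3 := Cf_double1 k hk1
    calc (∑ j ∈ Finset.Icc 2 (2 * k + 1), w j)
        ≡ 3 - ∑ j ∈ Finset.Icc 2 k, w j [ZMOD 4] := h1
      _ ≡ 3 - Cf k [ZMOD 4] := Int.ModEq.sub_left 3 h2'
      _ ≡ Cf (2 * k + 1) [ZMOD 4] := h3.symm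

lemma w_mod (n : ℕ) (hn : 2 ≤ n) (hnp : ¬∃ c : ℕ, n = 2 ^ c) :
    w n ≡ Rf n [ZMOD 8] := by
  induction n using Nat.strong_induction_on with
  | _ n ih =>
  rcases Nat.even_or_odd n with ⟨k, hk⟩ | ⟨k, hk⟩
  · -- n = 2k even
    have hk' : n = 2 * k := by omega
    subst hk'
    have hknp : ¬∃ c : ℕ, k = 2 ^ c := by
      rintro ⟨c, rfl⟩
      exact hnp ⟨c + 1, by ring⟩
    have hk3 : 3 ≤ k := by
      by_contra h
      interval_cases k
      · omega
      · exact hknp ⟨0, rfl⟩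
      · exact hknp ⟨1, rfl⟩
    have hE2 := S_even w hw k (by omega)
    have hSC := two_mod4_to_mod8 (S_Cf w hw k (by omega))
    have hIH := ih k (by omega) (by omega) hknp
    have hRd := Rdouble k hk3 hknp
    calc w (2 * k) = 2 + 2 * (∑ j ∈ Finset.Icc 2 k, w j) - w k := hE2
      _ ≡ 2 + 2 * Cf k - w k [ZMOD 8] := by
          exact Int.ModEq.sub (hSC.add_left 2) Int.ModEq.rfl
      _ ≡ 2 + 2 * Cf k - Rf k [ZMOD 8] := Int.ModEq.sub Int.ModEq.rfl hIH
      _ ≡ Rf (2 * k) [ZMOD 8] := hRd.symm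
  · -- n odd
    subst hk
    have hk1 : 1 ≤ k := by omega
    have hE1 := S_odd w hw k hk1
    have hSC := two_mod4_to_mod8 (S_Cf w hw k hk1)
    calc w (2 * k + 1) = 2 + 2 * (∑ j ∈ Finset.Icc 2 k, w j) := hE1
      _ ≡ 2 + 2 * Cf k [ZMOD 8] := hSC.add_left 2
      _ = Rf (2 * k + 1) := (Rodd k hk1).symm

end Main

/-- Main theorem: congruence class of w(n) modulo 8 for n not a power of 2,
with a = v₂(n), e = ⌊log₂ n⌋ and nᵢ the binary digits of n. -/
theorem stmt10 (w : ℕ → ℤ)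
    (hw : ∀ n : ℕ, w n = ∑' i : ℕ, PowerSeries.coeff (R := ℤ) n (Wseries (i + 2)))
    (n : ℕ) (hn : 2 ≤ n) (hnp : ¬∃ c : ℕ, n = 2 ^ c) :
    w n ≡
      2 + 2 * ((padicValNat 2 n / 2 : ℕ) : ℤ)
        + 2 * (if padicValNat 2 n % 2 = 0 then (1 : ℤ) else 0) *
            (1 - 2 * (if n.testBit (padicValNat 2 n + 1) then (1 : ℤ) else 0)) *
            ((Nat.log 2 n : ℤ) - padicValNat 2 n - 1)
        + 4 * (if padicValNat 2 n % 2 = 1 then (1 : ℤ) else 0) *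
            ((Nat.log 2 n : ℤ) - padicValNat 2 n)
        + 4 * (if padicValNat 2 n % 2 = 0 then (1 : ℤ) else 0) *
            ((Nat.log 2 n : ℤ) *
                (∑ i ∈ Finset.Icc (padicValNat 2 n + 2)
                    (Nat.log 2 n - if Nat.log 2 n % 2 = 0 then 1 else 0),
                  (if n.testBit i then (1 : ℤ) else 0))
              + (padicValNat 2 n : ℤ) *
                  (if n.testBit (padicValNat 2 n + 2) then (1 : ℤ) else 0)
              + ∑ t ∈ Finset.Icc ((padicValNat 2 n + 4) / 2)
                    ((Nat.log 2 n + 1) / 2),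
                  (if n.testBit (2 * t - 1) then (1 : ℤ) else 0)) [ZMOD 8] := by
  have h := w_mod w hw n hn hnp
  simp only [Rf, bitz] at h
  exact h
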